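/- Let (Ω, ℱ, ℙ) be a probability space, n ≥ 1 a natural number, B > 0, and let 𝔈₀ ⊇ 𝔈₁ ⊇ ⋯ ⊇ 𝔈ₙ be a decreasing family of events. Let G₀, …, Gₙ : Ω → ℝ be integrable random variables with |Gᵢ| ≤ B almost surely, and let w₀, …, w_{n−1} ≥ 0 be reals such that for every i < n, 𝔼[G_{i+1}·1_{𝔈_{i+1}}] − 𝔼[Gᵢ·1_{𝔈ᵢ}] ≤ −B·(ℙ(𝔈_{i+1}) − ℙ(𝔈ᵢ)) − wᵢ·ℙ(𝔈ᵢ). Then (Σ_{i<n} wᵢ)·ℙ(𝔈_{n−1}) ≤ 3B. -/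

import Mathlib

open MeasureTheory
open scoped BigOperators

/-- Counting argument for entering the strongly convex region: for a decreasing family of
events `𝔈₀ ⊇ ⋯ ⊇ 𝔈ₙ`, bounded potentials `Gᵢ` and guaranteed decreases `wᵢ` satisfying
`𝔼[G_{i+1} 1_{𝔈_{i+1}}] − 𝔼[Gᵢ 1_{𝔈ᵢ}] ≤ −B(ℙ𝔈_{i+1} − ℙ𝔈ᵢ) − wᵢ ℙ𝔈ᵢ`,
we get `(Σ wᵢ) ℙ(𝔈_{n−1}) ≤ 3B`. -/
theorem decrease_counting_argument
    {Ω : Type*} [MeasurableSpace Ω] (μ : Measure Ω) [IsProbabilityMeasure μ]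
    (n : ℕ) (hn : 1 ≤ n) (B : ℝ) (hB : 0 < B)
    (Ev : ℕ → Set Ω) (hmeas : ∀ i, i ≤ n → MeasurableSet (Ev i))
    (hdec : ∀ i, i < n → Ev (i + 1) ⊆ Ev i)
    (G : ℕ → Ω → ℝ) (hGint : ∀ i, i ≤ n → Integrable (G i) μ)
    (hGbd : ∀ i, i ≤ n → ∀ᵐ ω ∂μ, |G i ω| ≤ B)
    (w : ℕ → ℝ) (hw : ∀ i, i < n → 0 ≤ w i)
    (hstep : ∀ i, i < n →
      (∫ ω in Ev (i + 1), G (i + 1) ω ∂μ) - ∫ ω in Ev i, G i ω ∂μ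
        ≤ -B * ((μ (Ev (i + 1))).toReal - (μ (Ev i)).toReal)
          - w i * (μ (Ev i)).toReal) :
    (∑ i ∈ Finset.range n, w i) * (μ (Ev (n - 1))).toReal ≤ 3 * B := by
  set f : ℕ → ℝ := fun i => (μ (Ev i)).toReal with hf
  set F : ℕ → ℝ := fun i => ∫ ω in Ev i, G i ω ∂μ with hF
  -- monotonicity of events
  have hsub : ∀ i j, i ≤ j → j ≤ n → Ev j ⊆ Ev i := by
    intro i j hij hjn
    induction j with
    | zero => simp_all
    | succ k ih =>
      rcases Nat.lt_or_ge i (k+1) with h | h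
      · exact (hdec k (Nat.lt_of_lt_of_le (Nat.lt_succ_self k) hjn)).trans
          (ih (Nat.lt_succ_iff.mp h) (Nat.le_of_succ_le hjn))
      · have : i = k + 1 := le_antisymm hij h
        subst this; exact subset_rfl
  have hf_mono : ∀ i j, i ≤ j → j ≤ n → f j ≤ f i := by
    intro i j hij hjn
    exact ENNReal.toReal_mono (measure_ne_top μ _) (measure_mono (hsub i j hij hjn))
  have hf_nonneg : ∀ i, 0 ≤ f i := fun i => ENNReal.toReal_nonneg
  have hf_le_one : ∀ i, f i ≤ 1 := by
    intro i
    have := prob_le_one (μ := μ) (s := Ev i)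
    simpa [hf] using ENNReal.toReal_mono (by simp) this
  -- bound on set integrals
  have hFbd : ∀ i, i ≤ n → |F i| ≤ B * f i := by
    intro i hi
    have h1 : |F i| ≤ ∫ ω in Ev i, |G i ω| ∂μ := by
      simpa [hF, Real.norm_eq_abs] using
        norm_integral_le_integral_norm (μ := μ.restrict (Ev i)) (G i)
    have h2 : ∫ ω in Ev i, |G i ω| ∂μ ≤ ∫ _ω in Ev i, B ∂μ := by
      apply integral_mono_ae
      · exact ((hGint i hi).restrict).abs
      · exact integrable_const B
      · exact ae_restrict_of_ae (hGbd i hi)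
    have h3 : ∫ _ω in Ev i, B ∂μ = B * f i := by
      simp [hf, mul_comm, Measure.real]
    linarith
  -- telescoping
  have hsum := Finset.sum_le_sum (fun i hi => hstep i (Finset.mem_range.mp hi))
  have hL : ∑ i ∈ Finset.range n,
      ((∫ ω in Ev (i + 1), G (i + 1) ω ∂μ) - ∫ ω in Ev i, G i ω ∂μ) = F n - F 0 :=
    Finset.sum_range_sub (fun i => F i) n
  have hR : ∑ i ∈ Finset.range n,
      (-B * ((μ (Ev (i + 1))).toReal - (μ (Ev i)).toReal) - w i * (μ (Ev i)).toReal)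
      = -B * (f n - f 0) - ∑ i ∈ Finset.range n, w i * f i := by
    rw [Finset.sum_sub_distrib, ← Finset.mul_sum,
      Finset.sum_range_sub (fun i => f i)]
  rw [hL, hR] at hsum
  -- lower bound the weighted sum
  have hwf : (∑ i ∈ Finset.range n, w i) * f (n - 1)
      ≤ ∑ i ∈ Finset.range n, w i * f i := by
    rw [Finset.sum_mul]
    apply Finset.sum_le_sum
    intro i hi
    have hi' := Finset.mem_range.mp hi
    have hle : f (n - 1) ≤ f i := hf_mono i (n - 1) (Nat.le_sub_one_of_lt hi')
      (Nat.sub_le n 1)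
    exact mul_le_mul_of_nonneg_left hle (hw i hi')
  have hF0 := hFbd 0 (Nat.zero_le n)
  have hFn := hFbd n le_rfl
  have h0 : |F 0| ≤ B * 1 := le_trans hF0
    (mul_le_mul_of_nonneg_left (hf_le_one 0) hB.le)
  have hn' : |F n| ≤ B * f n := hFn
  have habs0 := abs_le.mp h0
  have habsn := abs_le.mp hn'
  have hfn1 : f (n-1) ≤ 1 := hf_le_one _
  have hBf0 : B * f 0 ≤ B := by nlinarith [hf_le_one 0, hf_nonneg 0]
  show (∑ i ∈ Finset.range n, w i) * f (n - 1) ≤ 3 * B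
  linarith [habs0.1, habs0.2, habsn.1, habsn.2]
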